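/- For all real ω₁, ω₂: (1/54)(2+cos ω₁)(2+cos ω₂)(5+cos(ω₁+ω₂)) = |(1/(24√6))(1+√3+(−1+√3)e^{iω₁})(1+√3+(−1+√3)e^{iω₂})(2+√6+(−2+√6)e^{i(ω₁+ω₂)})|². -/

import Mathlib

open Complex in
lemma abs_sq_lin (a b ω : ℝ) :
    ‖(a:ℂ) + (b:ℂ) * Complex.exp (Complex.I * (ω:ℂ))‖ ^ 2
      = a^2 + b^2 + 2*a*b*Real.cos ω := by
  rw [mul_comm Complex.I, Complex.exp_mul_I, Complex.sq_norm, Complex.normSq_apply]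
  simp [Complex.cos_ofReal_re, Complex.sin_ofReal_re]
  nlinarith [Real.sin_sq_add_cos_sq ω]

open Complex in
/-- The explicit Fejér–Riesz (single square) factorization of the reciprocal of the
vanishing moment recovery function `S` for the box spline with direction matrix
`[I I e]` in two dimensions:
`(1/54)(2+cos ω₁)(2+cos ω₂)(5+cos(ω₁+ω₂)) = |(1/(24√6))(1+√3+(−1+√3)e^{iω₁})(1+√3+(−1+√3)e^{iω₂})(2+√6+(−2+√6)e^{i(ω₁+ω₂)})|²`. -/
theorem fejer_riesz_factorization_boxspline (ω₁ ω₂ : ℝ) :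
    (1 / 54) * (2 + Real.cos ω₁) * (2 + Real.cos ω₂) * (5 + Real.cos (ω₁ + ω₂))
      = ‖(((1 / (24 * Real.sqrt 6) : ℝ) : ℂ)
            * (1 + (Real.sqrt 3 : ℂ) + (-1 + (Real.sqrt 3 : ℂ)) * Complex.exp (Complex.I * (ω₁ : ℂ)))
            * (1 + (Real.sqrt 3 : ℂ) + (-1 + (Real.sqrt 3 : ℂ)) * Complex.exp (Complex.I * (ω₂ : ℂ)))
            * (2 + (Real.sqrt 6 : ℂ) + (-2 + (Real.sqrt 6 : ℂ))
                * Complex.exp (Complex.I * ((ω₁ : ℂ) + (ω₂ : ℂ)))))‖ ^ 2 := by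
  have h3 : Real.sqrt 3 ^ 2 = 3 := Real.sq_sqrt (by norm_num)
  have h6 : Real.sqrt 6 ^ 2 = 6 := Real.sq_sqrt (by norm_num)
  have h6pos : (0:ℝ) < Real.sqrt 6 := Real.sqrt_pos.mpr (by norm_num)
  have e1 : (1 + (Real.sqrt 3 : ℂ) + (-1 + (Real.sqrt 3 : ℂ)) * Complex.exp (Complex.I * (ω₁ : ℂ)))
      = (((1 + Real.sqrt 3 : ℝ)) : ℂ) + (((-1 + Real.sqrt 3 : ℝ)) : ℂ) * Complex.exp (Complex.I * (ω₁ : ℂ)) := by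
    push_cast; ring
  have e2 : (1 + (Real.sqrt 3 : ℂ) + (-1 + (Real.sqrt 3 : ℂ)) * Complex.exp (Complex.I * (ω₂ : ℂ)))
      = (((1 + Real.sqrt 3 : ℝ)) : ℂ) + (((-1 + Real.sqrt 3 : ℝ)) : ℂ) * Complex.exp (Complex.I * (ω₂ : ℂ)) := by
    push_cast; ring
  have e3 : (2 + (Real.sqrt 6 : ℂ) + (-2 + (Real.sqrt 6 : ℂ)) * Complex.exp (Complex.I * ((ω₁ : ℂ) + (ω₂ : ℂ))))
      = (((2 + Real.sqrt 6 : ℝ)) : ℂ) + (((-2 + Real.sqrt 6 : ℝ)) : ℂ) * Complex.exp (Complex.I * ((ω₁ + ω₂ : ℝ) : ℂ)) := by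
    push_cast; ring
  rw [e1, e2, e3, norm_mul, norm_mul, norm_mul, mul_pow, mul_pow, mul_pow,
    abs_sq_lin, abs_sq_lin, abs_sq_lin, Complex.norm_real, Real.norm_eq_abs]
  rw [abs_of_pos (by positivity : (0:ℝ) < 1 / (24 * Real.sqrt 6))]
  have : (1 / (24 * Real.sqrt 6)) ^ 2 = 1 / 3456 := by
    rw [div_pow, mul_pow, h6]; norm_num
  rw [this]
  have f1 : (1 + Real.sqrt 3)^2 + (-1 + Real.sqrt 3)^2 + 2*(1 + Real.sqrt 3)*(-1 + Real.sqrt 3)*Real.cos ω₁ = 4*(2 + Real.cos ω₁) := by linear_combination (2 + 2*Real.cos ω₁) * h3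
  have f2 : (1 + Real.sqrt 3)^2 + (-1 + Real.sqrt 3)^2 + 2*(1 + Real.sqrt 3)*(-1 + Real.sqrt 3)*Real.cos ω₂ = 4*(2 + Real.cos ω₂) := by linear_combination (2 + 2*Real.cos ω₂) * h3
  have f3 : (2 + Real.sqrt 6)^2 + (-2 + Real.sqrt 6)^2 + 2*(2 + Real.sqrt 6)*(-2 + Real.sqrt 6)*Real.cos (ω₁+ω₂) = 4*(5 + Real.cos (ω₁+ω₂)) := by linear_combination (2 + 2*Real.cos (ω₁+ω₂)) * h6
  rw [f1, f2, f3]; ring
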